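/- arXiv:1909.03639 — 6 statements merged into one kernel-verified Lean document; each statement's English description precedes it below -/
import Mathlib

section
/- Let h > 0 and k ≥ 1 be real numbers. The k-expansion map Φ_{k,h} is Lipschitz with constant k on the horoball B_h with respect to the hyperbolic metric: for all z, w ∈ B_h one has dist(Φ_{k,h}(z), Φ_{k,h}(w)) ≤ k · dist(z, w). -/
open UpperHalfPlane Real

/-- The `k`-expansion map `Φ_{k,h}` of the horoball `B_h = {z ∈ ℍ : h ≤ Im z}`:
`Φ_{k,h}(z) = Re z + i·h·(Im z / h)^k`. -/
noncomputable def expMap (k h : ℝ) (hh : 0 < h) (z : UpperHalfPlane) : UpperHalfPlane :=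
  ⟨⟨z.re, h * (z.im / h) ^ k⟩, by
    simpa using mul_pos hh (Real.rpow_pos_of_pos (div_pos z.im_pos hh) k)⟩

private lemma sinh_sq_sub' (A B : ℝ) :
    Real.sinh A ^ 2 - Real.sinh B ^ 2 = Real.sinh (A + B) * Real.sinh (A - B) := by
  rw [Real.sinh_add, Real.sinh_sub]
  nlinarith [Real.cosh_sq A, Real.cosh_sq B]

private lemma key_ineq (k t u : ℝ) (hk : 1 ≤ k) (hu : 0 ≤ u) (hut : u ≤ t) :
    Real.sinh t ^ 2 - Real.sinh u ^ 2 + Real.sinh (k * u) ^ 2 ≤ Real.sinh (k * t) ^ 2 := by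
  have h1 : Real.sinh (k*t) ^ 2 - Real.sinh (k*u) ^ 2
      = Real.sinh (k*(t+u)) * Real.sinh (k*(t-u)) := by
    rw [sinh_sq_sub' (k*t) (k*u)]; ring_nf
  have h2 : Real.sinh t ^ 2 - Real.sinh u ^ 2 = Real.sinh (t+u) * Real.sinh (t-u) :=
    sinh_sq_sub' t u
  have ha : Real.sinh (t+u) ≤ Real.sinh (k*(t+u)) :=
    Real.sinh_le_sinh.2 (le_mul_of_one_le_left (by linarith) hk)
  have hb : Real.sinh (t-u) ≤ Real.sinh (k*(t-u)) :=
    Real.sinh_le_sinh.2 (le_mul_of_one_le_left (by linarith) hk)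
  have ha0 : 0 ≤ Real.sinh (t+u) := Real.sinh_nonneg_iff.2 (by linarith)
  have hb0 : 0 ≤ Real.sinh (t-u) := Real.sinh_nonneg_iff.2 (by linarith)
  have := mul_le_mul ha hb hb0 (le_trans ha0 ha)
  linarith

private lemma sinh_half_log_div' {p q : ℝ} (hp : 0 < p) (hq : 0 < q) :
    Real.sinh (Real.log (p / q) / 2) = (p - q) / (2 * Real.sqrt (p * q)) := by
  have hsp : 0 < Real.sqrt p := Real.sqrt_pos.2 hp
  have hsq : 0 < Real.sqrt q := Real.sqrt_pos.2 hq
  have h1 : Real.log (p / q) / 2 = Real.log (Real.sqrt p / Real.sqrt q) := by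
    rw [Real.log_div hsp.ne' hsq.ne', Real.log_sqrt hp.le, Real.log_sqrt hq.le,
      Real.log_div hp.ne' hq.ne']
    ring
  rw [h1, Real.sinh_log (div_pos hsp hsq), Real.sqrt_mul hp.le, inv_div]
  have e1 : Real.sqrt p * Real.sqrt p = p := Real.mul_self_sqrt hp.le
  have e2 : Real.sqrt q * Real.sqrt q = q := Real.mul_self_sqrt hq.le
  field_simp
  ring_nf
  rw [Real.sq_sqrt hp.le, Real.sq_sqrt hq.le]

set_option maxHeartbeats 1000000 in
/-- For `h > 0` and `k ≥ 1`, the `k`-expansion map is `k`-Lipschitz on the horoball `B_h`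
for the hyperbolic metric. -/
theorem expMap_lipschitz_on_horoball (h k : ℝ) (hh : 0 < h) (hk : 1 ≤ k)
    (z w : UpperHalfPlane) (hz : h ≤ z.im) (hw : h ≤ w.im) :
    dist (expMap k h hh z) (expMap k h hh w) ≤ k * dist z w := by
  have hk0 : (0:ℝ) < k := lt_of_lt_of_le one_pos hk
  have hz0 : 0 < z.im := z.im_pos
  have hw0 : 0 < w.im := w.im_pos
  set y1 := z.im with hy1
  set y2 := w.im with hy2
  set Y1 : ℝ := h * (y1 / h) ^ k with hY1
  set Y2 : ℝ := h * (y2 / h) ^ k with hY2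
  have hY1pos : 0 < Y1 := mul_pos hh (Real.rpow_pos_of_pos (div_pos hz0 hh) k)
  have hY2pos : 0 < Y2 := mul_pos hh (Real.rpow_pos_of_pos (div_pos hw0 hh) k)
  set t := dist z w / 2 with htdef
  have ht0 : 0 ≤ t := by positivity
  have hst : Real.sinh t = dist (z:ℂ) (w:ℂ) / (2 * Real.sqrt (y1 * y2)) :=
    UpperHalfPlane.sinh_half_dist z w
  have hstF : Real.sinh (dist (expMap k h hh z) (expMap k h hh w) / 2)
      = dist ((expMap k h hh z):ℂ) ((expMap k h hh w):ℂ) / (2 * Real.sqrt (Y1 * Y2)) :=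
    UpperHalfPlane.sinh_half_dist _ _
  set u := Real.log (y1 / y2) / 2 with hudef
  have hsu : Real.sinh u = (y1 - y2) / (2 * Real.sqrt (y1 * y2)) := sinh_half_log_div' hz0 hw0
  have hratio : Y1 / Y2 = (y1 / y2) ^ k := by
    rw [hY1, hY2, mul_div_mul_left _ _ hh.ne', ← Real.div_rpow (by positivity) (by positivity)]
    congr 1
    field_simp
  have hku : k * u = Real.log (Y1 / Y2) / 2 := by
    rw [hratio, Real.log_rpow (div_pos hz0 hw0), hudef]; ring
  have hsku : Real.sinh (k * u) = (Y1 - Y2) / (2 * Real.sqrt (Y1 * Y2)) := by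
    rw [hku]; exact sinh_half_log_div' hY1pos hY2pos
  have habs2 : dist (z:ℂ) (w:ℂ) ^ 2 = (z.re - w.re)^2 + (y1 - y2)^2 := by
    rw [Complex.dist_eq, Complex.sq_norm]
    simp [Complex.normSq_apply, Complex.sub_re, Complex.sub_im, UpperHalfPlane.coe_re,
      UpperHalfPlane.coe_im]
    ring
  have habsF2 : dist ((expMap k h hh z):ℂ) ((expMap k h hh w):ℂ) ^ 2
      = (z.re - w.re)^2 + (Y1 - Y2)^2 := by
    rw [Complex.dist_eq, Complex.sq_norm]
    simp [Complex.normSq_apply, Complex.sub_re, Complex.sub_im, UpperHalfPlane.coe_re,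
      UpperHalfPlane.coe_im, expMap]
    ring
  have hsqy : Real.sqrt (y1 * y2) ^ 2 = y1 * y2 := Real.sq_sqrt (by positivity)
  have hsqY : Real.sqrt (Y1 * Y2) ^ 2 = Y1 * Y2 := Real.sq_sqrt (by positivity)
  have hst2 : Real.sinh t ^ 2 = ((z.re - w.re)^2 + (y1 - y2)^2) / (4 * (y1 * y2)) := by
    rw [hst, div_pow, habs2, mul_pow, hsqy]; norm_num
  have hsu2 : Real.sinh u ^ 2 = (y1 - y2)^2 / (4 * (y1 * y2)) := by
    rw [hsu, div_pow, mul_pow, hsqy]; norm_num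
  have hsku2 : Real.sinh (k * u) ^ 2 = (Y1 - Y2)^2 / (4 * (Y1 * Y2)) := by
    rw [hsku, div_pow, mul_pow, hsqY]; norm_num
  have hSF2 : Real.sinh (dist (expMap k h hh z) (expMap k h hh w) / 2) ^ 2
      = ((z.re - w.re)^2 + (Y1 - Y2)^2) / (4 * (Y1 * Y2)) := by
    rw [hstF, div_pow, habsF2, mul_pow, hsqY]; norm_num
  -- y1*y2 ≤ Y1*Y2
  have hyY : y1 * y2 ≤ Y1 * Y2 := by
    have h1 : Y1 * Y2 = h^2 * ((y1/h) * (y2/h)) ^ k := by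
      rw [hY1, hY2, Real.mul_rpow (by positivity) (by positivity)]; ring
    have h1a : (1:ℝ) ≤ y1 / h := (one_le_div hh).2 hz
    have h1b : (1:ℝ) ≤ y2 / h := (one_le_div hh).2 hw
    have hc1 : (1:ℝ) ≤ (y1/h) * (y2/h) :=
      le_trans h1a (le_mul_of_one_le_right (by linarith) h1b)
    have h2 : (y1/h) * (y2/h) ≤ ((y1/h) * (y2/h)) ^ k := by
      calc (y1/h) * (y2/h) = ((y1/h) * (y2/h)) ^ (1:ℝ) := (Real.rpow_one _).symm
        _ ≤ ((y1/h) * (y2/h)) ^ k := Real.rpow_le_rpow_of_exponent_le hc1 hk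
    calc y1 * y2 = h^2 * ((y1/h) * (y2/h)) := by field_simp
      _ ≤ h^2 * ((y1/h) * (y2/h)) ^ k :=
          mul_le_mul_of_nonneg_left h2 (sq_nonneg h)
      _ = Y1 * Y2 := h1.symm
  -- |u| ≤ t
  have hdistim : |y1 - y2| ≤ dist (z:ℂ) (w:ℂ) := by
    rw [Complex.dist_eq]
    have := Complex.abs_im_le_norm ((z:ℂ) - (w:ℂ))
    simpa using this
  have huabs : |u| ≤ t := by
    rw [← Real.sinh_le_sinh, ← Real.abs_sinh, hsu, hst, abs_div,
      abs_of_nonneg (by positivity : (0:ℝ) ≤ 2 * Real.sqrt (y1 * y2))]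
    gcongr
  -- core inequality
  have hkey := key_ineq k t |u| hk (abs_nonneg u) huabs
  have e1 : Real.sinh |u| ^ 2 = Real.sinh u ^ 2 := by
    rw [← Real.abs_sinh]; exact sq_abs _
  have e2 : Real.sinh (k * |u|) ^ 2 = Real.sinh (k * u) ^ 2 := by
    have hku' : k * |u| = |k * u| := by rw [abs_mul, abs_of_nonneg hk0.le]
    rw [hku', ← Real.abs_sinh, sq_abs]
  rw [e1, e2] at hkey
  have hid1 : Real.sinh t ^ 2 - Real.sinh u ^ 2 = (z.re - w.re)^2 / (4 * (y1 * y2)) := by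
    rw [hst2, hsu2]; ring
  have hxx : (z.re - w.re)^2 / (4 * (Y1 * Y2)) ≤ (z.re - w.re)^2 / (4 * (y1 * y2)) := by
    gcongr
  have hmain : Real.sinh (dist (expMap k h hh z) (expMap k h hh w) / 2) ^ 2
      ≤ Real.sinh (k * t) ^ 2 := by
    rw [hSF2]
    have hsplit : ((z.re - w.re)^2 + (Y1 - Y2)^2) / (4 * (Y1 * Y2))
        = (z.re - w.re)^2 / (4 * (Y1 * Y2)) + Real.sinh (k*u)^2 := by
      rw [hsku2]; ring
    rw [hsplit]
    linarith
  have hS0 : 0 ≤ Real.sinh (dist (expMap k h hh z) (expMap k h hh w) / 2) :=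
    Real.sinh_nonneg_iff.2 (by positivity)
  have hR0 : 0 ≤ Real.sinh (k * t) := Real.sinh_nonneg_iff.2 (by positivity)
  have hSle : Real.sinh (dist (expMap k h hh z) (expMap k h hh w) / 2) ≤ Real.sinh (k * t) := by
    calc Real.sinh (dist (expMap k h hh z) (expMap k h hh w) / 2)
        = Real.sqrt (Real.sinh (dist (expMap k h hh z) (expMap k h hh w) / 2) ^ 2) :=
          (Real.sqrt_sq hS0).symm
      _ ≤ Real.sqrt (Real.sinh (k * t) ^ 2) := Real.sqrt_le_sqrt hmain
      _ = Real.sinh (k * t) := Real.sqrt_sq hR0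
  have := Real.sinh_le_sinh.1 hSle
  rw [htdef] at this
  linarith
end

section
/- Let h > 0 and k ≥ 1 be real numbers. The Lipschitz constant of the k-expansion map Φ_{k,h} on the horoball B_h (with respect to the hyperbolic metric) is precisely k: Φ_{k,h} satisfies dist(Φ_{k,h}(z), Φ_{k,h}(w)) ≤ k · dist(z, w) for all z, w ∈ B_h, and for every real k' with 0 ≤ k' < k there exist z, w ∈ B_h with dist(Φ_{k,h}(z), Φ_{k,h}(w)) > k' · dist(z, w). -/
open UpperHalfPlane Real

lemma cosh_add_sub' (a b : ℝ) :
    Real.cosh (a + b) - Real.cosh (a - b) = 2 * Real.sinh a * Real.sinh b := by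
  rw [Real.cosh_add, Real.cosh_sub]
  ring

lemma mono_key {k s t : ℝ} (hk : 1 ≤ k) (hs : 0 ≤ s) (hst : s ≤ t) :
    Real.sinh (k * s) ^ 2 + Real.sinh t ^ 2 ≤ Real.sinh (k * t) ^ 2 + Real.sinh s ^ 2 := by
  have sq : ∀ x : ℝ, Real.sinh x ^ 2 = (Real.cosh (2 * x) - 1) / 2 := fun x => by
    have h1 := Real.cosh_two_mul x
    have h2 := Real.cosh_sq x
    linarith
  rw [sq, sq, sq, sq]
  have e1 : Real.cosh (2 * (k * t)) - Real.cosh (2 * (k * s)) =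
      2 * Real.sinh (k * (t + s)) * Real.sinh (k * (t - s)) := by
    have := cosh_add_sub' (k * (t + s)) (k * (t - s))
    have ha : k * (t + s) + k * (t - s) = 2 * (k * t) := by ring
    have hb : k * (t + s) - k * (t - s) = 2 * (k * s) := by ring
    rwa [ha, hb] at this
  have e2 : Real.cosh (2 * t) - Real.cosh (2 * s) =
      2 * Real.sinh (t + s) * Real.sinh (t - s) := by
    have := cosh_add_sub' (t + s) (t - s)
    have ha : t + s + (t - s) = 2 * t := by ring
    have hb : t + s - (t - s) = 2 * s := by ring
    rwa [ha, hb] at this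
  have hts : 0 ≤ t + s := by linarith
  have htm : 0 ≤ t - s := by linarith
  have m1 : Real.sinh (t + s) ≤ Real.sinh (k * (t + s)) :=
    Real.sinh_le_sinh.2 (le_mul_of_one_le_left hts hk)
  have m2 : Real.sinh (t - s) ≤ Real.sinh (k * (t - s)) :=
    Real.sinh_le_sinh.2 (le_mul_of_one_le_left htm hk)
  have n1 : 0 ≤ Real.sinh (t + s) := by
    simpa using Real.sinh_le_sinh.2 hts
  have n2 : 0 ≤ Real.sinh (t - s) := by
    simpa using Real.sinh_le_sinh.2 htm
  nlinarith [mul_le_mul m1 m2 n2 (le_trans n1 m1)]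

lemma core_key {k a2 s A B : ℝ} (hk : 1 ≤ k) (ha2 : 0 ≤ a2) (hs : 0 ≤ s) (hA : 0 ≤ A) (hB : 0 ≤ B)
    (h1 : A ^ 2 = a2 + Real.sinh s ^ 2) (h2 : B ^ 2 ≤ a2 + Real.sinh (k * s) ^ 2) :
    Real.arsinh B ≤ k * Real.arsinh A := by
  set t := Real.arsinh A with htdef
  have hsA : Real.sinh t = A := Real.sinh_arsinh A
  have hss : 0 ≤ Real.sinh s := by simpa using Real.sinh_le_sinh.2 hs
  have hsle : Real.sinh s ≤ A := by nlinarith [hss, hA, ha2]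
  have hst : s ≤ t := by
    rw [← Real.sinh_le_sinh, hsA]; exact hsle
  have hmono := mono_key hk hs hst
  have hBt : B ^ 2 ≤ Real.sinh (k * t) ^ 2 := by nlinarith
  have hkt : 0 ≤ Real.sinh (k * t) := by
    have : (0:ℝ) ≤ k * t := mul_nonneg (by linarith) (le_trans hs hst)
    simpa using Real.sinh_le_sinh.2 this
  have hBle : B ≤ Real.sinh (k * t) := by nlinarith
  calc Real.arsinh B ≤ Real.arsinh (Real.sinh (k * t)) := Real.arsinh_le_arsinh.2 hBle
    _ = k * t := Real.arsinh_sinh _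

lemma sinh_half_log {p q : ℝ} (hq : 0 < q) (hpq : q ≤ p) :
    Real.sinh (Real.log (p / q) / 2) = (p - q) / (2 * Real.sqrt (p * q)) := by
  have hp : 0 < p := lt_of_lt_of_le hq hpq
  have hdiv : 0 < p / q := div_pos hp hq
  have h1 : Real.exp (Real.log (p / q) / 2) = Real.sqrt (p / q) := by
    rw [← Real.log_sqrt hdiv.le, Real.exp_log (Real.sqrt_pos.2 hdiv)]
  rw [Real.sinh_eq, Real.exp_neg, h1]
  rw [Real.sqrt_div hp.le, Real.sqrt_mul hp.le]
  have hsp : 0 < Real.sqrt p := Real.sqrt_pos.2 hp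
  have hsq : 0 < Real.sqrt q := Real.sqrt_pos.2 hq
  have hp2 : Real.sqrt p ^ 2 = p := Real.sq_sqrt hp.le
  have hq2 : Real.sqrt q ^ 2 = q := Real.sq_sqrt hq.le
  rw [inv_div, div_sub_div _ _ hsq.ne' hsp.ne', Real.mul_self_sqrt hp.le,
    Real.mul_self_sqrt hq.le, div_div]
  ring

lemma dist_formula (z w : ℍ) : dist z w =
    2 * Real.arsinh (Real.sqrt ((z.re - w.re) ^ 2 + (z.im - w.im) ^ 2) /
      (2 * Real.sqrt (z.im * w.im))) := by
  rw [UpperHalfPlane.dist_eq, Complex.dist_eq_re_im]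
  norm_num [UpperHalfPlane.coe_re, UpperHalfPlane.coe_im]

lemma expMap_re (k h : ℝ) (hh : 0 < h) (z : ℍ) : (expMap k h hh z).re = z.re := rfl

lemma expMap_im (k h : ℝ) (hh : 0 < h) (z : ℍ) :
    (expMap k h hh z).im = h * (z.im / h) ^ k := rfl

lemma lip_half (h k : ℝ) (hh : 0 < h) (hk : 1 ≤ k) (z w : ℍ)
    (hz : h ≤ z.im) (hw : h ≤ w.im) (hord : w.im ≤ z.im) :
    dist (expMap k h hh z) (expMap k h hh w) ≤ k * dist z w := by
  set y₁ := z.im with hy1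
  set y₂ := w.im with hy2
  have hy2pos : 0 < y₂ := lt_of_lt_of_le hh hw
  have hy1pos : 0 < y₁ := lt_of_lt_of_le hh hz
  set u := z.re - w.re with hu
  set s := Real.log (y₁ / y₂) / 2 with hsdef
  have hs : 0 ≤ s := by
    have : (1:ℝ) ≤ y₁ / y₂ := (one_le_div hy2pos).2 hord
    have := Real.log_nonneg this
    simp only [hsdef]; linarith
  have hsinh_s : Real.sinh s = (y₁ - y₂) / (2 * Real.sqrt (y₁ * y₂)) :=
    sinh_half_log hy2pos hord
  set Y₁ := h * (y₁ / h) ^ k with hY1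
  set Y₂ := h * (y₂ / h) ^ k with hY2
  have hY2pos : 0 < Y₂ := mul_pos hh (Real.rpow_pos_of_pos (div_pos hy2pos hh) k)
  have hYord : Y₂ ≤ Y₁ := by
    apply mul_le_mul_of_nonneg_left _ hh.le
    exact Real.rpow_le_rpow (by positivity) (by gcongr) (by linarith)
  have hYdiv : Y₁ / Y₂ = (y₁ / y₂) ^ k := by
    rw [hY1, hY2, mul_div_mul_left _ _ hh.ne',
      ← Real.div_rpow (by positivity) (by positivity)]
    congr 1
    field_simp
  have hks : Real.log (Y₁ / Y₂) / 2 = k * s := by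
    rw [hYdiv, Real.log_rpow (div_pos hy1pos hy2pos), hsdef]
    ring
  have hsinh_ks : Real.sinh (k * s) = (Y₁ - Y₂) / (2 * Real.sqrt (Y₁ * Y₂)) := by
    rw [← hks]; exact sinh_half_log hY2pos hYord
  -- product inequality
  have hYprod : y₁ * y₂ ≤ Y₁ * Y₂ := by
    have h1 : (1:ℝ) ≤ y₁ / h * (y₂ / h) :=
      one_le_mul_of_one_le_of_one_le ((one_le_div hh).2 hz) ((one_le_div hh).2 hw)
    have h2 : y₁ / h * (y₂ / h) ≤ (y₁ / h * (y₂ / h)) ^ k := by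
      nth_rewrite 1 [← Real.rpow_one (y₁ / h * (y₂ / h))]
      exact Real.rpow_le_rpow_of_exponent_le h1 hk
    have h3 : Y₁ * Y₂ = h ^ 2 * (y₁ / h * (y₂ / h)) ^ k := by
      rw [hY1, hY2, Real.mul_rpow (by positivity) (by positivity)]
      ring
    have h4 : y₁ * y₂ = h ^ 2 * (y₁ / h * (y₂ / h)) := by
      field_simp
    rw [h3, h4]
    exact mul_le_mul_of_nonneg_left h2 (by positivity)
  set A := Real.sqrt (u ^ 2 + (y₁ - y₂) ^ 2) / (2 * Real.sqrt (y₁ * y₂)) with hAdef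
  set B := Real.sqrt (u ^ 2 + (Y₁ - Y₂) ^ 2) / (2 * Real.sqrt (Y₁ * Y₂)) with hBdef
  have hA : 0 ≤ A := by positivity
  have hB : 0 ≤ B := by positivity
  have hsq1 : Real.sqrt (y₁ * y₂) ^ 2 = y₁ * y₂ := Real.sq_sqrt (by positivity)
  have hsq2 : Real.sqrt (Y₁ * Y₂) ^ 2 = Y₁ * Y₂ := Real.sq_sqrt (by positivity)
  have hsqy : 0 < Real.sqrt (y₁ * y₂) := Real.sqrt_pos.2 (by positivity)
  have hsqY : 0 < Real.sqrt (Y₁ * Y₂) := Real.sqrt_pos.2 (by positivity)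
  have hA2 : A ^ 2 = u ^ 2 / (4 * (y₁ * y₂)) + Real.sinh s ^ 2 := by
    rw [hAdef, hsinh_s, div_pow, div_pow,
      Real.sq_sqrt (by positivity : (0:ℝ) ≤ u ^ 2 + (y₁ - y₂) ^ 2), mul_pow, hsq1]
    field_simp
    ring
  have hB2 : B ^ 2 ≤ u ^ 2 / (4 * (y₁ * y₂)) + Real.sinh (k * s) ^ 2 := by
    have : B ^ 2 = u ^ 2 / (4 * (Y₁ * Y₂)) + Real.sinh (k * s) ^ 2 := by
      rw [hBdef, hsinh_ks, div_pow, div_pow,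
        Real.sq_sqrt (by positivity : (0:ℝ) ≤ u ^ 2 + (Y₁ - Y₂) ^ 2), mul_pow, hsq2]
      field_simp
      ring
    rw [this]
    have : u ^ 2 / (4 * (Y₁ * Y₂)) ≤ u ^ 2 / (4 * (y₁ * y₂)) :=
      div_le_div_of_nonneg_left (by positivity) (by positivity) (by linarith)
    linarith
  have hcore := core_key (a2 := u ^ 2 / (4 * (y₁ * y₂))) hk (by positivity) hs hA hB hA2 hB2
  have hde1 : dist z w = 2 * Real.arsinh A := by
    rw [dist_formula]
  have hde2 : dist (expMap k h hh z) (expMap k h hh w) = 2 * Real.arsinh B := by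
    rw [dist_formula, expMap_re, expMap_re, expMap_im, expMap_im]
  rw [hde1, hde2]
  linarith

/-- For `h > 0` and `k ≥ 1`, the optimal Lipschitz constant of the `k`-expansion map on the
horoball `B_h` (with the hyperbolic metric) is precisely `k`: it is `k`-Lipschitz on `B_h`,
and for every `0 ≤ k' < k` there are points of `B_h` whose image distance exceeds `k'` times
their distance. -/
theorem expMap_lipschitz_constant_eq (h k : ℝ) (hh : 0 < h) (hk : 1 ≤ k) :
    (∀ z w : UpperHalfPlane, h ≤ z.im → h ≤ w.im →
      dist (expMap k h hh z) (expMap k h hh w) ≤ k * dist z w) ∧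
    (∀ k' : ℝ, 0 ≤ k' → k' < k →
      ∃ z w : UpperHalfPlane, h ≤ z.im ∧ h ≤ w.im ∧
        k' * dist z w < dist (expMap k h hh z) (expMap k h hh w)) := by
  constructor
  · intro z w hz hw
    rcases le_total w.im z.im with hord | hord
    · exact lip_half h k hh hk z w hz hw hord
    · rw [dist_comm, dist_comm z w]
      exact lip_half h k hh hk w z hw hz hord
  · intro k' hk'0 hk'k
    refine ⟨⟨⟨0, h⟩, by simpa using hh⟩, ⟨⟨0, 2 * h⟩, by simpa using by positivity⟩, ?_, ?_, ?_⟩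
    · exact le_refl _
    · show h ≤ 2 * h; linarith
    · set z : ℍ := ⟨⟨0, h⟩, by simpa using hh⟩
      set w : ℍ := ⟨⟨0, 2 * h⟩, by simpa using by positivity⟩
      have hz_im : z.im = h := rfl
      have hw_im : w.im = 2 * h := rfl
      have hz_re : z.re = 0 := rfl
      have hw_re : w.re = 0 := rfl
      have hd1 : dist z w = Real.log 2 := by
        rw [UpperHalfPlane.dist_of_re_eq (by rw [hz_re, hw_re]), hz_im, hw_im,
          Real.dist_eq, Real.log_mul (by norm_num) hh.ne', abs_sub_comm]
        rw [abs_of_nonneg (by linarith [Real.log_pos (by norm_num : (1:ℝ) < 2)])]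
        ring
      have hΦz_im : (expMap k h hh z).im = h := by
        rw [expMap_im, hz_im, div_self hh.ne', Real.one_rpow, mul_one]
      have hΦw_im : (expMap k h hh w).im = h * (2 : ℝ) ^ k := by
        rw [expMap_im, hw_im]
        congr 2
        field_simp
      have hd2 : dist (expMap k h hh z) (expMap k h hh w) = k * Real.log 2 := by
        rw [UpperHalfPlane.dist_of_re_eq (by rw [expMap_re, expMap_re, hz_re, hw_re]),
          hΦz_im, hΦw_im, Real.dist_eq,
          Real.log_mul hh.ne' (by positivity : ((2:ℝ) ^ k) ≠ 0),
          Real.log_rpow (by norm_num), abs_sub_comm]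
        have hlog2 : 0 < Real.log 2 := Real.log_pos (by norm_num)
        rw [abs_of_nonneg (by nlinarith)]
        ring
      rw [hd1, hd2]
      exact mul_lt_mul_of_pos_right hk'k (Real.log_pos (by norm_num))
end

section
/- Let h > 0 and k > 0 be real numbers. The k-expansion map Φ_{k,h} multiplies distances along vertical geodesics by exactly k: for all z, w ∈ B_h with Re z = Re w, one has dist(z, w) = |log(Im z) − log(Im w)| and dist(Φ_{k,h}(z), Φ_{k,h}(w)) = k · dist(z, w). -/
open UpperHalfPlane Real

/-- The `k`-expansion map multiplies distances along vertical geodesics by exactly `k`: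
for `z, w ∈ B_h` on a common vertical line, `dist z w = |log (Im z) − log (Im w)|` and
`dist (Φ z) (Φ w) = k · dist z w`. -/
theorem expMap_expands_vertical_geodesics (h k : ℝ) (hh : 0 < h) (hk : 0 < k)
    (z w : UpperHalfPlane) (hz : h ≤ z.im) (hw : h ≤ w.im) (hre : z.re = w.re) :
    dist z w = |Real.log z.im - Real.log w.im| ∧
    dist (expMap k h hh z) (expMap k h hh w) = k * dist z w := by
  have h1 : dist z w = |Real.log z.im - Real.log w.im| := by
    rw [UpperHalfPlane.dist_of_re_eq hre, Real.dist_eq]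
  refine ⟨h1, ?_⟩
  have hre' : (expMap k h hh z).re = (expMap k h hh w).re := hre
  rw [UpperHalfPlane.dist_of_re_eq hre', Real.dist_eq, h1]
  have him : ∀ u : UpperHalfPlane, (expMap k h hh u).im = h * (u.im / h) ^ k := fun u => rfl
  rw [him, him, Real.log_mul hh.ne' (Real.rpow_pos_of_pos (div_pos z.im_pos hh) k).ne',
    Real.log_mul hh.ne' (Real.rpow_pos_of_pos (div_pos w.im_pos hh) k).ne',
    Real.log_rpow (div_pos z.im_pos hh), Real.log_rpow (div_pos w.im_pos hh),
    Real.log_div z.im_pos.ne' hh.ne', Real.log_div w.im_pos.ne' hh.ne']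
  rw [show Real.log h + k * (Real.log z.im - Real.log h) -
      (Real.log h + k * (Real.log w.im - Real.log h)) =
      k * (Real.log z.im - Real.log w.im) by ring,
    abs_mul, abs_of_pos hk]
end

section
/- Let h > 0 and k ≥ 1 be real numbers. The k-expansion map Φ_{k,h} contracts distances along horocycles centered at ∞: for all z, w ∈ B_h with Im z = Im w, one has dist(Φ_{k,h}(z), Φ_{k,h}(w)) = 2·arsinh(|Re z − Re w| / (2·h·(Im z / h)^k)) ≤ dist(z, w). -/
open UpperHalfPlane Real

/-- For `h > 0`, `k ≥ 1`, the `k`-expansion map contracts distances along horocycles centered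
at `∞`: for `z, w ∈ B_h` with `Im z = Im w`,
`dist (Φ z) (Φ w) = 2·arsinh (|Re z − Re w| / (2·h·(Im z / h)^k)) ≤ dist z w`. -/
theorem expMap_contracts_horocycles (h k : ℝ) (hh : 0 < h) (hk : 1 ≤ k)
    (z w : UpperHalfPlane) (hz : h ≤ z.im) (hw : h ≤ w.im) (him : z.im = w.im) :
    dist (expMap k h hh z) (expMap k h hh w)
      = 2 * Real.arsinh (|z.re - w.re| / (2 * (h * (z.im / h) ^ k))) ∧
    dist (expMap k h hh z) (expMap k h hh w) ≤ dist z w := by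
  have hzim : (0:ℝ) < z.im := z.im_pos
  set A : ℝ := h * (z.im / h) ^ k with hA
  have hApos : 0 < A := mul_pos hh (Real.rpow_pos_of_pos (div_pos z.im_pos hh) k)
  have hre : (expMap k h hh z).re = z.re := rfl
  have hwre : (expMap k h hh w).re = w.re := rfl
  have him' : (expMap k h hh z).im = A := rfl
  have hwim' : (expMap k h hh w).im = A := by
    show h * (w.im / h) ^ k = A
    rw [hA, him]
  have hdc : dist ((expMap k h hh z : ℂ)) ((expMap k h hh w : ℂ)) = |z.re - w.re| := by
    rw [Complex.dist_of_im_eq (by rw [UpperHalfPlane.coe_im, UpperHalfPlane.coe_im, him', hwim'])]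
    rw [Real.dist_eq, UpperHalfPlane.coe_re, UpperHalfPlane.coe_re, hre, hwre]
  have heq : dist (expMap k h hh z) (expMap k h hh w)
      = 2 * Real.arsinh (|z.re - w.re| / (2 * A)) := by
    rw [UpperHalfPlane.dist_eq, hdc, him', hwim']
    rw [Real.sqrt_mul_self hApos.le]
  refine ⟨heq, ?_⟩
  have hdzw : dist ((z:ℂ)) ((w:ℂ)) = |z.re - w.re| := by
    rw [Complex.dist_of_im_eq (by rw [UpperHalfPlane.coe_im, UpperHalfPlane.coe_im, him])]
    simp [Real.dist_eq, UpperHalfPlane.coe_re]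
  rw [heq, UpperHalfPlane.dist_eq, hdzw, ← him, Real.sqrt_mul_self hzim.le]
  have hle : z.im ≤ A := by
    have h1 : (1:ℝ) ≤ z.im / h := (one_le_div hh).mpr hz
    have := Real.rpow_le_rpow_of_exponent_le h1 hk
    rw [Real.rpow_one] at this
    calc z.im = h * (z.im / h) := by field_simp
      _ ≤ A := mul_le_mul_of_nonneg_left this hh.le
  gcongr
end

section
/- For every real k ≥ 1, the two-sector expansion map F_k expands the geodesic from 0 to ∞ (the positive imaginary axis) by the factor exactly k: F_k(i·y) = i·y^k for every real y > 0, and dist(F_k(i·y₁), F_k(i·y₂)) = k · dist(i·y₁, i·y₂) for all y₁, y₂ > 0. Consequently, for every real k' with 0 ≤ k' < k, F_k is not k'-Lipschitz, so (combined with its k-Lipschitzness) the optimal Lipschitz constant of F_k equals k. -/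
open UpperHalfPlane Real

/-- Vertical expansion `z ↦ Re z + i·(Im z)^k` (the `k`-expansion map of the horoball
`{Im z ≥ 1}`, extended to all of `ℍ`). -/
noncomputable def vexp (k : ℝ) (z : UpperHalfPlane) : UpperHalfPlane :=
  ⟨⟨z.re, z.im ^ k⟩, by simpa using Real.rpow_pos_of_pos z.im_pos k⟩

/-- The hyperbolic isometry `z ↦ -1/z` of the upper half-plane. -/
noncomputable def neginv (z : UpperHalfPlane) : UpperHalfPlane :=
  ⟨-((z : ℂ)⁻¹), by
    have hz : (z : ℂ) ≠ 0 := z.ne_zero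
    have him : (-((z : ℂ)⁻¹)).im = z.im / Complex.normSq z := by
      simp [Complex.inv_im, UpperHalfPlane.coe_im, neg_div]
    rw [him]
    exact div_pos z.im_pos (Complex.normSq_pos.mpr hz)⟩

/-- The two-sector expansion map `F_k : ℍ → ℍ`: the `k`-expansion map on the horoball
`{Im z ≥ 1}`, its conjugate by `z ↦ -1/z` on the horoball `{|z - i/2| ≤ 1/2}` based at `0`,
and the identity elsewhere. -/
noncomputable def twoSector (k : ℝ) (z : UpperHalfPlane) : UpperHalfPlane :=
  if 1 ≤ z.im then vexp k z
  else if ‖(z : ℂ) - Complex.I / 2‖ ≤ 1 / 2 then neginv (vexp k (neginv z))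
  else z

lemma vexp_re' (k : ℝ) (z : UpperHalfPlane) : (vexp k z).re = z.re := rfl
lemma vexp_im' (k : ℝ) (z : UpperHalfPlane) : (vexp k z).im = z.im ^ k := rfl

lemma neginv_re' (z : UpperHalfPlane) (h : z.re = 0) : (neginv z).re = 0 := by
  show (-((z : ℂ)⁻¹)).re = 0
  simp [Complex.inv_re, ← UpperHalfPlane.coe_re] at h ⊢
  left; exact h

lemma neginv_im' (z : UpperHalfPlane) (h : z.re = 0) : (neginv z).im = z.im⁻¹ := by
  have hre : (z : ℂ).re = 0 := h
  have hns : Complex.normSq (z : ℂ) = z.im ^ 2 := by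
    simp [Complex.normSq_apply, hre, ← UpperHalfPlane.coe_im, h]
    ring
  show (-((z : ℂ)⁻¹)).im = z.im⁻¹
  rw [Complex.neg_im, Complex.inv_im, hns, ← UpperHalfPlane.coe_im]
  have := z.im_pos.ne'
  field_simp

lemma twoSector_axis (k : ℝ) (z : UpperHalfPlane) (h : z.re = 0) :
    (twoSector k z).re = 0 ∧ (twoSector k z).im = z.im ^ k := by
  have hy : 0 < z.im := z.im_pos
  unfold twoSector
  by_cases h1 : 1 ≤ z.im
  · rw [if_pos h1]
    exact ⟨by rw [vexp_re', h], vexp_im' k z⟩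
  · rw [if_neg h1]
    have hball : ‖(z : ℂ) - Complex.I / 2‖ ≤ 1 / 2 := by
      have hre : (z : ℂ).re = 0 := h
      have he : ((z : ℂ) - Complex.I / 2) = Complex.I * ((z.im - 1/2 : ℝ) : ℂ) := by
        apply Complex.ext <;> simp [hre, ← UpperHalfPlane.coe_im, h]
      rw [he, norm_mul, Complex.norm_I, one_mul, Complex.norm_real, Real.norm_eq_abs, abs_le]
      constructor <;> [linarith; linarith [le_of_not_ge h1]]
    rw [if_pos hball]
    have h2 : (neginv z).re = 0 := neginv_re' z h
    have h3 : (vexp k (neginv z)).re = 0 := by rw [vexp_re', h2]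
    refine ⟨neginv_re' _ h3, ?_⟩
    rw [neginv_im' _ h3, vexp_im', neginv_im' _ h, Real.inv_rpow hy.le, inv_inv]

/-- For `k ≥ 1`, the two-sector expansion map `F_k` expands the geodesic from `0` to `∞`
(the positive imaginary axis, i.e. the points of `ℍ` with real part `0`) by exactly the
factor `k`: `F_k(i·y) = i·y^k`, distances along this axis are multiplied by exactly `k`,
and consequently `F_k` is not `k'`-Lipschitz for any `0 ≤ k' < k` (so its optimal Lipschitz
constant is exactly `k`). -/
theorem twoSector_expands_imaginary_axis (k : ℝ) (hk : 1 ≤ k) :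
    (∀ z : UpperHalfPlane, z.re = 0 →
      (twoSector k z).re = 0 ∧ (twoSector k z).im = z.im ^ k) ∧
    (∀ z w : UpperHalfPlane, z.re = 0 → w.re = 0 →
      dist (twoSector k z) (twoSector k w) = k * dist z w) ∧
    (∀ k' : ℝ, 0 ≤ k' → k' < k →
      ¬ (∀ z w : UpperHalfPlane,
          dist (twoSector k z) (twoSector k w) ≤ k' * dist z w)) := by
  have key : ∀ z w : UpperHalfPlane, z.re = 0 → w.re = 0 →
      dist (twoSector k z) (twoSector k w) = k * dist z w := by
    intro z w hz hw
    obtain ⟨rz, iz⟩ := twoSector_axis k z hz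
    obtain ⟨rw', iw⟩ := twoSector_axis k w hw
    rw [UpperHalfPlane.dist_of_re_eq (rz.trans rw'.symm),
      UpperHalfPlane.dist_of_re_eq (hz.trans hw.symm), iz, iw,
      Real.log_rpow z.im_pos, Real.log_rpow w.im_pos, Real.dist_eq, Real.dist_eq,
      ← mul_sub, abs_mul, abs_of_nonneg (by linarith : (0:ℝ) ≤ k)]
  refine ⟨fun z h => twoSector_axis k z h, key, ?_⟩
  intro k' _ hk' H
  set z : UpperHalfPlane := ⟨Complex.I, by simp⟩ with hzdef
  set w : UpperHalfPlane := ⟨⟨0, Real.exp 1⟩, by simpa using Real.exp_pos 1⟩ with hwdef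
  have hz : z.re = 0 := rfl
  have hw : w.re = 0 := rfl
  have hzim : z.im = 1 := rfl
  have hwim : w.im = Real.exp 1 := rfl
  have hd : dist z w = 1 := by
    rw [UpperHalfPlane.dist_of_re_eq (hz.trans hw.symm), hzim, hwim, Real.dist_eq,
      Real.log_exp, Real.log_one]
    norm_num
  have := H z w
  rw [key z w hz hw, hd, mul_one, mul_one] at this
  linarith
end

section
/- There exists x₀ > 1 such that for all real x ≥ x₀, arsinh(x³)/arsinh(x²) < arsinh(√(x⁶ + 1)/√(x⁸ − 1)) / arsinh(1/√(x⁴ − 1)). (The left side tends to 3/2 while the right side grows like x, so the arc-length ratio eventually strictly exceeds the maximal curve-length ratio.) -/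
open Real

/-- There is an `x₀ > 1` such that for all `x ≥ x₀`, the maximal curve-length ratio
`arsinh (x³) / arsinh (x²)` is strictly smaller than the orthogeodesic arc-length ratio
`arsinh (√(x⁶ + 1)/√(x⁸ − 1)) / arsinh (1/√(x⁴ − 1))`. -/
theorem arc_ratio_eventually_exceeds_curve_ratio :
    ∃ x₀ : ℝ, 1 < x₀ ∧ ∀ x : ℝ, x₀ ≤ x →
      arsinh (x ^ 3) / arsinh (x ^ 2) <
        arsinh (Real.sqrt (x ^ 6 + 1) / Real.sqrt (x ^ 8 - 1)) /
          arsinh (1 / Real.sqrt (x ^ 4 - 1)) := by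
  refine ⟨3, by norm_num, fun x hx => ?_⟩
  have hx1 : (1:ℝ) < x := by linarith
  have hx0 : (0:ℝ) < x := by linarith
  have hx2 : (0:ℝ) < x ^ 2 := by positivity
  have hx3 : (0:ℝ) < x ^ 3 := by positivity
  have h4 : (0:ℝ) < x ^ 4 - 1 := by nlinarith
  have h8 : (0:ℝ) < x ^ 8 - 1 := by nlinarith
  have h6 : (0:ℝ) < x ^ 6 + 1 := by positivity
  have hs : (0:ℝ) < Real.sqrt (x ^ 4 - 1) := Real.sqrt_pos.mpr h4
  have hp : (0:ℝ) < Real.sqrt (x ^ 6 + 1) := Real.sqrt_pos.mpr h6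
  have hq : (0:ℝ) < Real.sqrt (x ^ 8 - 1) := Real.sqrt_pos.mpr h8
  have hs2 : Real.sqrt (x ^ 4 - 1) ^ 2 = x ^ 4 - 1 := Real.sq_sqrt h4.le
  have hp2 : Real.sqrt (x ^ 6 + 1) ^ 2 = x ^ 6 + 1 := Real.sq_sqrt h6.le
  have hq2 : Real.sqrt (x ^ 8 - 1) ^ 2 = x ^ 8 - 1 := Real.sq_sqrt h8.le
  set b : ℝ := 1 / Real.sqrt (x ^ 4 - 1) with hb
  set a : ℝ := Real.sqrt (x ^ 6 + 1) / Real.sqrt (x ^ 8 - 1) with ha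
  have hbpos : 0 < b := by positivity
  have hapos : 0 < a := by positivity
  -- arsinh positivity
  have hB : 0 < arsinh (x ^ 2) := by
    rw [show (0:ℝ) = arsinh 0 by simp]
    exact Real.arsinh_lt_arsinh.mpr hx2
  have hD : 0 < arsinh b := by
    rw [show (0:ℝ) = arsinh 0 by simp]
    exact Real.arsinh_lt_arsinh.mpr hbpos
  -- LHS ≤ 2
  have hL : arsinh (x ^ 3) ≤ 2 * arsinh (x ^ 2) := by
    have key : x ^ 3 ≤ Real.sinh (2 * arsinh (x ^ 2)) := by
      rw [Real.sinh_two_mul, Real.sinh_arsinh, Real.cosh_arsinh]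
      have h1 : x ^ 2 ≤ Real.sqrt (1 + (x ^ 2) ^ 2) := by
        nlinarith [Real.sq_sqrt (show (0:ℝ) ≤ 1 + (x ^ 2) ^ 2 by positivity),
          Real.sqrt_nonneg (1 + (x ^ 2) ^ 2)]
      nlinarith
    calc arsinh (x ^ 3) ≤ arsinh (Real.sinh (2 * arsinh (x ^ 2))) :=
          Real.arsinh_le_arsinh.mpr key
      _ = 2 * arsinh (x ^ 2) := Real.arsinh_sinh _
  -- RHS > 2
  have hR : 2 * arsinh b < arsinh a := by
    have key : Real.sinh (2 * arsinh b) < a := by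
      rw [Real.sinh_two_mul, Real.sinh_arsinh, Real.cosh_arsinh]
      have hb2 : b ^ 2 = 1 / (x ^ 4 - 1) := by
        rw [hb, div_pow, one_pow, hs2]
      have h1b : (0:ℝ) ≤ 1 + b ^ 2 := by positivity
      have hsq : Real.sqrt (1 + b ^ 2) = x ^ 2 / Real.sqrt (x ^ 4 - 1) := by
        rw [hb2, show 1 + 1 / (x ^ 4 - 1) = x ^ 4 / (x ^ 4 - 1) by field_simp; ring,
          Real.sqrt_div (by positivity),
          show x ^ 4 = (x ^ 2) ^ 2 by ring, Real.sqrt_sq hx2.le]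
      rw [hsq]
      have e : 2 * b * (x ^ 2 / Real.sqrt (x ^ 4 - 1)) = 2 * x ^ 2 / (x ^ 4 - 1) := by
        rw [hb, ← hs2]; field_simp; rw [Real.sqrt_sq hs.le]
      have main : 2 * x ^ 2 * Real.sqrt (x ^ 8 - 1)
          < (x ^ 4 - 1) * Real.sqrt (x ^ 6 + 1) := by
        have hpoly : 4 * x ^ 4 * (x ^ 8 - 1) < (x ^ 4 - 1) ^ 2 * (x ^ 6 + 1) := by
          nlinarith [pow_le_pow_left₀ (by norm_num : (0:ℝ) ≤ 3) hx 12,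
            pow_pos hx0 10, pow_pos hx0 12, pow_pos hx0 4]
        have e1 : (2 * x ^ 2 * Real.sqrt (x ^ 8 - 1)) ^ 2 = 4 * x ^ 4 * (x ^ 8 - 1) := by
          rw [mul_pow, hq2]; ring
        have e2 : ((x ^ 4 - 1) * Real.sqrt (x ^ 6 + 1)) ^ 2
            = (x ^ 4 - 1) ^ 2 * (x ^ 6 + 1) := by
          rw [mul_pow, hp2]
        have h1 : (2 * x ^ 2 * Real.sqrt (x ^ 8 - 1)) ^ 2
            < ((x ^ 4 - 1) * Real.sqrt (x ^ 6 + 1)) ^ 2 := by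
          rw [e1, e2]; exact hpoly
        exact lt_of_pow_lt_pow_left₀ 2 (by positivity) h1
      rw [e, ha, div_lt_div_iff₀ h4 hq]
      nlinarith [main]
    calc 2 * arsinh b = arsinh (Real.sinh (2 * arsinh b)) := (Real.arsinh_sinh _).symm
      _ < arsinh a := Real.arsinh_lt_arsinh.mpr key
  calc arsinh (x ^ 3) / arsinh (x ^ 2) ≤ 2 := by
        rw [div_le_iff₀ hB]; linarith
    _ < arsinh a / arsinh b := by
        rw [lt_div_iff₀ hD]; linarith
end
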